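/- There exist absolute constants K > 0 and c_0 > 0 such that the following holds. Let t ≥ 4 be an even integer, C > 0, and 0 < ε < 1 with C^2·ε ≤ c_0. Consider an ε-corruption setup with parameters n, d, ε, and assume the certifiable subgaussianity bounds: for every integer 1 ≤ t' ≤ t/2 and every u ∈ ℝ^d, (1/n) Σ_i ⟨u, x_i − μ⟩^{2t'} ≤ (C t')^{t'} · Q(u)^{t'} and (1/n) Σ_i ⟨u, x*_i − μ*⟩^{2t'} ≤ (C t')^{t'} · Q*(u)^{t'}. Then for every u ∈ ℝ^d, (Q(u) − Q*(u))^2 ≤ K · (C t)^2 · ε^{2 − 4/t} · Q*(u)^2. -/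

import Mathlib

set_option maxHeartbeats 2000000

open Finset

lemma aux_xexp (x : ℝ) : x * Real.exp (-(x/2)) ≤ 3/4 := by
  have h := Real.add_one_le_exp (x/2 - 1)
  have he : (2.7182818283 : ℝ) < Real.exp 1 := Real.exp_one_gt_d9
  have hs : Real.exp (x/2 - 1) = Real.exp (x/2) / Real.exp 1 := by
    rw [Real.exp_sub]
  have hx2 : x ≤ (3/4) * Real.exp (x/2) := by
    rw [hs] at h
    have h1 : 0 < Real.exp 1 := Real.exp_pos 1
    rw [le_div_iff₀ h1] at h
    nlinarith [Real.exp_pos (x/2)]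
  have hmul : Real.exp (x/2) * Real.exp (-(x/2)) = 1 := by
    rw [← Real.exp_add]; norm_num
  have hp : 0 < Real.exp (-(x/2)) := Real.exp_pos _
  nlinarith [hp, hmul, mul_le_mul_of_nonneg_right hx2 hp.le]

lemma aux_theta (t : ℕ) (ht : 4 ≤ t) (hte : Even t) (C ε : ℝ) (hC : 1 ≤ C)
    (hε : 0 < ε) (hc : C ^ 2 * ε ≤ 1 / 10 ^ 7) :
    ∃ s : ℕ, 1 ≤ s ∧ s ≤ t / 2 ∧
      (2 * ε) ^ (1 - 1 / (s : ℝ)) * (C * s) ≤ 1 / 100 ∧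
      (2 * ε) ^ (1 - 1 / (s : ℝ)) * (C * s) ≤ 8 * (C * t) * (2 * ε) ^ (1 - 2 / (t : ℝ)) := by
  have hε7 : ε ≤ 1 / 10 ^ 7 := by nlinarith [sq_nonneg (C - 1), sq_nonneg (C + 1)]
  have h2ε : (0:ℝ) < 2 * ε := by linarith
  have h2ε1 : 2 * ε ≤ 1 / 4 := by linarith
  set L : ℝ := -Real.log (2 * ε) with hLdef
  have hexpL : Real.exp (-L) = 2 * ε := by
    rw [hLdef, neg_neg, Real.exp_log h2ε]
  have hrw : ∀ r : ℝ, (2 * ε) ^ r = Real.exp (-(L * r)) := by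
    intro r
    rw [Real.rpow_def_of_pos h2ε]
    congr 1
    rw [hLdef]; ring
  have hL1 : 1 ≤ L := by
    have h3 : 2 * ε ≤ Real.exp (-1) := by
      rw [Real.exp_neg]
      have h5 : Real.exp 1 ≤ 3 := by nlinarith [Real.exp_one_lt_d9]
      have h4 : (0:ℝ) < Real.exp 1 := Real.exp_pos 1
      have h6 : (3:ℝ)⁻¹ ≤ (Real.exp 1)⁻¹ := by
        apply inv_anti₀ h4 h5
      have h7 : (3:ℝ)⁻¹ = 1/3 := by norm_num
      linarith
    have := Real.log_le_iff_le_exp h2ε |>.2 h3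
    rw [hLdef]; linarith
  have hCexp : C ^ 2 * Real.exp (-L) ≤ 2 / 10 ^ 7 := by
    rw [hexpL]; nlinarith
  obtain ⟨k, hk⟩ := hte
  have hm : t / 2 = k := by omega
  have hk2 : 2 ≤ k := by omega
  have htk : (t:ℝ) = 2 * k := by rw [hk]; push_cast; ring
  have hk0 : (0:ℝ) < (k:ℝ) := by
    have : 0 < k := by omega
    exact_mod_cast this
  by_cases hcs : ⌈L⌉₊ ≤ k
  · -- Case A : s = ⌈L⌉₊
    refine ⟨⌈L⌉₊, ?_, by omega, ?_, ?_⟩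
    · have : 0 < ⌈L⌉₊ := Nat.ceil_pos.2 (by linarith)
      omega
    · -- θ ≤ 1/100
      rw [hrw]
      set s : ℕ := ⌈L⌉₊ with hsdef
      have hsL : L ≤ (s:ℝ) := Nat.le_ceil L
      have hsU : (s:ℝ) ≤ L + 1 := le_of_lt (Nat.ceil_lt_add_one (by linarith))
      have hs0 : (0:ℝ) < (s:ℝ) := by linarith
      have hsplit : -(L * (1 - 1/(s:ℝ))) = -L + L * (1/(s:ℝ)) := by ring
      rw [hsplit, Real.exp_add]
      have hexps : Real.exp (L * (1/(s:ℝ))) ≤ 3 := by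
        have h1 : L * (1/(s:ℝ)) ≤ 1 := by
          rw [mul_one_div, div_le_one hs0]; exact hsL
        have := Real.exp_le_exp.2 h1
        nlinarith [Real.exp_one_lt_d9]
      have hexpLpos : (0:ℝ) < Real.exp (-L) := Real.exp_pos _
      have hexpspos : (0:ℝ) < Real.exp (L * (1/(s:ℝ))) := Real.exp_pos _
      -- key product bound : C * L * exp (-L) ≤ 5/10^4 * (3/4)
      have hsq : (C * Real.exp (-(L/2)))^2 ≤ (5/10^4)^2 := by
        have he2 : Real.exp (-(L/2))^2 = Real.exp (-L) := by
          rw [pow_two, ← Real.exp_add]; congr 1; ring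
        rw [mul_pow, he2]
        nlinarith
      have hq' : C * Real.exp (-(L/2)) ≤ 5/10^4 := by
        have h0 : (0:ℝ) ≤ C * Real.exp (-(L/2)) := by positivity
        nlinarith
      have hLx : L * Real.exp (-(L/2)) ≤ 3/4 := aux_xexp L
      have hCL : C * L * Real.exp (-L) ≤ 3/4 * (5/10^4) := by
        have he2 : Real.exp (-L) = Real.exp (-(L/2)) * Real.exp (-(L/2)) := by
          rw [← Real.exp_add]; congr 1; ring
        have h1 : (0:ℝ) ≤ Real.exp (-(L/2)) := (Real.exp_pos _).le
        calc C * L * Real.exp (-L)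
            = (C * Real.exp (-(L/2))) * (L * Real.exp (-(L/2))) := by rw [he2]; ring
          _ ≤ (5/10^4) * (3/4) := by
              apply mul_le_mul hq' hLx (by positivity) (by norm_num)
          _ = 3/4 * (5/10^4) := by ring
      -- now assemble
      have hstep : Real.exp (-L) * Real.exp (L * (1/(s:ℝ))) * (C * s)
          ≤ Real.exp (-L) * 3 * (C * (2 * L)) := by
        have hCs : C * (s:ℝ) ≤ C * (2 * L) := by nlinarith
        apply mul_le_mul (mul_le_mul_of_nonneg_left hexps hexpLpos.le) hCs
          (by positivity) (by positivity)
      have : Real.exp (-L) * 3 * (C * (2 * L)) = 6 * (C * L * Real.exp (-L)) := by ring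
      linarith
    · -- θ ≤ 8 (C t) (2ε)^{1-2/t}
      set s : ℕ := ⌈L⌉₊ with hsdef
      have hsL : L ≤ (s:ℝ) := Nat.le_ceil L
      have hs0 : (0:ℝ) < (s:ℝ) := by linarith
      have hrpow1 : (2 * ε) ≤ (2 * ε) ^ (1 - 2/(t:ℝ)) := by
        have h1 : 1 - 2/(t:ℝ) ≤ 1 := by
          have ht0 : (0:ℝ) < (t:ℝ) := by
            have : 0 < t := by omega
            exact_mod_cast this
          have : (0:ℝ) ≤ 2/(t:ℝ) := by positivity
          linarith
        calc (2*ε) = (2*ε) ^ (1:ℝ) := (Real.rpow_one _).symm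
          _ ≤ (2 * ε) ^ (1 - 2/(t:ℝ)) :=
              Real.rpow_le_rpow_of_exponent_ge h2ε (by linarith) h1
      have hsk : (s:ℝ) ≤ (k:ℝ) := by exact_mod_cast hcs
      -- θ = exp(-L)·exp(L/s)·(C s) ≤ 3·(2ε)·C·s ≤ (3/2)·C·t·(2ε)
      rw [hrw]
      have hsplit : -(L * (1 - 1/(s:ℝ))) = -L + L * (1/(s:ℝ)) := by ring
      rw [hsplit, Real.exp_add, hexpL]
      have hexps : Real.exp (L * (1/(s:ℝ))) ≤ 3 := by
        have h1 : L * (1/(s:ℝ)) ≤ 1 := by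
          rw [mul_one_div, div_le_one hs0]; exact hsL
        have := Real.exp_le_exp.2 h1
        nlinarith [Real.exp_one_lt_d9]
      have hexpsp : (0:ℝ) < Real.exp (L * (1/(s:ℝ))) := Real.exp_pos _
      have step1 : (2*ε) * Real.exp (L * (1/(s:ℝ))) * (C * s) ≤ 3 * ((C * t) * (2*ε)) := by
        have hCs : C * (s:ℝ) ≤ C * (t:ℝ) := by
          have : (s:ℝ) ≤ (t:ℝ) := by rw [htk]; linarith
          nlinarith
        have e1 : (2*ε) * Real.exp (L * (1/(s:ℝ))) ≤ (2*ε) * 3 :=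
          mul_le_mul_of_nonneg_left hexps h2ε.le
        have e2 : (0:ℝ) ≤ C * (s:ℝ) := by positivity
        nlinarith [mul_le_mul e1 hCs e2 (by linarith : (0:ℝ) ≤ 2*ε*3)]
      have step2 : 3 * ((C * t) * (2*ε)) ≤ 8 * (C * t) * (2*ε) ^ (1 - 2/(t:ℝ)) := by
        have hCt : (0:ℝ) ≤ C * t := by positivity
        nlinarith [mul_le_mul_of_nonneg_left hrpow1 hCt]
      linarith
  · -- Case B : s = k
    push_neg at hcs
    have hkL : (k:ℝ) < L := Nat.lt_ceil.1 hcs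
    refine ⟨k, by omega, le_of_eq hm.symm, ?_, ?_⟩
    · -- θ ≤ 1/100
      rw [hrw]
      set θ := Real.exp (-(L * (1 - 1/(k:ℝ)))) * (C * k) with hθdef
      have hθ0 : (0:ℝ) ≤ θ := by positivity
      have hsq : θ^2 ≤ (1/100)^2 := by
        have ha : Real.exp (-(L * (1 - 1/(k:ℝ))))^2
            = Real.exp (-L) * Real.exp (-(L * (1 - 2/(k:ℝ)))) := by
          rw [pow_two, ← Real.exp_add, ← Real.exp_add]
          congr 1; ring
        have e1 : θ^2 = (C^2 * Real.exp (-L)) * ((k:ℝ)^2 * Real.exp (-(L * (1 - 2/(k:ℝ))))) := by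
          rw [hθdef, mul_pow, ha]; ring
        have h12k : (0:ℝ) ≤ 1 - 2/(k:ℝ) := by
          rw [sub_nonneg, div_le_one hk0]
          exact_mod_cast hk2
        have hfs : (k:ℝ) * (2/(k:ℝ)) = 2 := by field_simp
        have e2 : Real.exp (-(L * (1 - 2/(k:ℝ)))) ≤ Real.exp 2 * Real.exp (-(k:ℝ)) := by
          rw [← Real.exp_add]
          apply Real.exp_le_exp.2
          nlinarith [mul_le_mul_of_nonneg_right hkL.le h12k]
        have e3 : (k:ℝ)^2 * Real.exp (-(k:ℝ)) ≤ 9/16 := by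
          have hxk := aux_xexp (k:ℝ)
          have hxk0 : (0:ℝ) ≤ (k:ℝ) * Real.exp (-((k:ℝ)/2)) := by positivity
          have hsq2 : ((k:ℝ) * Real.exp (-((k:ℝ)/2)))^2 ≤ (3/4)^2 := by nlinarith
          have he2 : Real.exp (-((k:ℝ)/2))^2 = Real.exp (-(k:ℝ)) := by
            rw [pow_two, ← Real.exp_add]; congr 1; ring
          calc (k:ℝ)^2 * Real.exp (-(k:ℝ)) = ((k:ℝ) * Real.exp (-((k:ℝ)/2)))^2 := by
                rw [mul_pow, he2]
            _ ≤ (3/4)^2 := hsq2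
            _ = 9/16 := by norm_num
        have e4 : Real.exp 2 ≤ 74/10 := by
          have h1 := Real.exp_one_lt_d9
          have h2 : Real.exp 2 = Real.exp 1 * Real.exp 1 := by
            rw [← Real.exp_add]; norm_num
          nlinarith [Real.exp_pos 1]
        have e5 : (0:ℝ) ≤ Real.exp (-(L * (1 - 2/(k:ℝ)))) := (Real.exp_pos _).le
        have e6 : (0:ℝ) ≤ (k:ℝ)^2 := sq_nonneg _
        have e7 : (0:ℝ) ≤ C^2 * Real.exp (-L) := by positivity
        have e8 : (k:ℝ)^2 * Real.exp (-(L * (1 - 2/(k:ℝ))))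
            ≤ (74/10) * (9/16) := by
          calc (k:ℝ)^2 * Real.exp (-(L * (1 - 2/(k:ℝ))))
              ≤ (k:ℝ)^2 * (Real.exp 2 * Real.exp (-(k:ℝ))) :=
                mul_le_mul_of_nonneg_left e2 e6
            _ = Real.exp 2 * ((k:ℝ)^2 * Real.exp (-(k:ℝ))) := by ring
            _ ≤ (74/10) * (9/16) := by
                apply mul_le_mul e4 e3 (by positivity) (by norm_num)
        rw [e1]
        calc (C^2 * Real.exp (-L)) * ((k:ℝ)^2 * Real.exp (-(L * (1 - 2/(k:ℝ)))))
            ≤ (2/10^7) * ((74/10) * (9/16)) := by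
              apply mul_le_mul hCexp e8 (by positivity) (by norm_num)
          _ ≤ (1/100)^2 := by norm_num
      nlinarith
    · -- θ ≤ 8 (C t) (2ε)^{1-2/t}
      have hexp_eq : 1 - 2/(t:ℝ) = 1 - 1/(k:ℝ) := by
        rw [htk]
        have : 2 / (2 * (k:ℝ)) = 1 / (k:ℝ) := by
          field_simp
        rw [this]
      rw [hexp_eq]
      have hX : (0:ℝ) ≤ (2*ε) ^ (1 - 1/(k:ℝ)) := Real.rpow_nonneg h2ε.le _
      have hCk : (0:ℝ) ≤ C * (k:ℝ) := by positivity
      rw [htk]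
      nlinarith [mul_nonneg hX hCk]

lemma aux_holder (n : ℕ) (B : Finset (Fin n)) (f : Fin n → ℝ)
    (hf : ∀ i, 0 ≤ f i) (s : ℕ) :
    ((n:ℝ)⁻¹ * ∑ i ∈ B, f i) ^ (s+1)
      ≤ ((B.card : ℝ)/n) ^ s * ((n:ℝ)⁻¹ * ∑ i ∈ B, f i ^ (s+1)) := by
  have key : (∑ i ∈ B, f i) ^ (s+1) ≤ (B.card : ℝ) ^ s * ∑ i ∈ B, f i ^ (s+1) :=
    pow_sum_le_card_mul_sum_pow (fun i _ => hf i) s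
  calc ((n:ℝ)⁻¹ * ∑ i ∈ B, f i) ^ (s+1)
      = ((n:ℝ)⁻¹)^(s+1) * (∑ i ∈ B, f i) ^ (s+1) := by rw [mul_pow]
    _ ≤ ((n:ℝ)⁻¹)^(s+1) * ((B.card : ℝ) ^ s * ∑ i ∈ B, f i ^ (s+1)) := by
        apply mul_le_mul_of_nonneg_left key (by positivity)
    _ = ((B.card : ℝ)/n) ^ s * ((n:ℝ)⁻¹ * ∑ i ∈ B, f i ^ (s+1)) := by
        rw [div_pow]; ring

lemma aux_g (n : ℕ) (hn : 0 < n) (Bad : Finset (Fin n)) (f : Fin n → ℝ)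
    (s' : ℕ) (C ε Qv : ℝ) (hC : 1 ≤ C) (hε : 0 < ε) (hQv : 0 ≤ Qv)
    (hcard : (Bad.card : ℝ) ≤ 2 * ε * n)
    (hmom : (n:ℝ)⁻¹ * ∑ i, f i ^ (2 * (s'+1)) ≤ (C * ((s'+1:ℕ):ℝ)) ^ (s'+1) * Qv ^ (s'+1)) :
    (n:ℝ)⁻¹ * ∑ i ∈ Bad, f i ^ 2
      ≤ ((2*ε) ^ (1 - 1/(((s'+1:ℕ)):ℝ)) * (C * ((s'+1:ℕ):ℝ))) * Qv := by
  have hn0 : (0:ℝ) < n := by exact_mod_cast hn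
  set g : ℝ := (n:ℝ)⁻¹ * ∑ i ∈ Bad, f i ^ 2 with hgdef
  have hg0 : 0 ≤ g := by positivity
  have hH := aux_holder n Bad (fun i => f i ^ 2) (fun i => sq_nonneg _) s'
  have hsum_le : (n:ℝ)⁻¹ * ∑ i ∈ Bad, (f i ^ 2) ^ (s'+1)
      ≤ (n:ℝ)⁻¹ * ∑ i, f i ^ (2 * (s'+1)) := by
    apply mul_le_mul_of_nonneg_left _ (by positivity)
    have : ∀ i, (f i ^ 2) ^ (s'+1) = f i ^ (2 * (s'+1)) := fun i => (pow_mul (f i) 2 (s'+1)).symm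
    simp only [this]
    exact sum_le_sum_of_subset_of_nonneg (subset_univ Bad)
      (fun i _ _ => Even.pow_nonneg ⟨s'+1, by ring⟩ _)
  have hcard' : (Bad.card : ℝ)/n ≤ 2*ε := by
    rw [div_le_iff₀ hn0]; linarith
  have hcard0 : (0:ℝ) ≤ (Bad.card : ℝ)/n := by positivity
  have hs1 : (1:ℝ) ≤ ((s'+1:ℕ):ℝ) := by exact_mod_cast Nat.one_le_iff_ne_zero.2 (Nat.succ_ne_zero s')
  have h2ε0 : (0:ℝ) < 2*ε := by linarith
  -- θ^(s'+1) = (2ε)^s' * (C(s'+1))^(s'+1)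
  have hrpow : ((2*ε) ^ (1 - 1/(((s'+1:ℕ)):ℝ))) ^ (s'+1) = (2*ε) ^ s' := by
    rw [← Real.rpow_natCast ((2*ε) ^ (1 - 1/(((s'+1:ℕ)):ℝ))) (s'+1),
        ← Real.rpow_mul h2ε0.le]
    rw [← Real.rpow_natCast (2*ε) s']
    congr 1
    have hne : ((s'+1:ℕ):ℝ) ≠ 0 := by positivity
    push_cast
    field_simp
    ring
  have hθ0 : (0:ℝ) ≤ (2*ε) ^ (1 - 1/(((s'+1:ℕ)):ℝ)) * (C * ((s'+1:ℕ):ℝ)) := by positivity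
  have hpow : g ^ (s'+1) ≤ (((2*ε) ^ (1 - 1/(((s'+1:ℕ)):ℝ)) * (C * ((s'+1:ℕ):ℝ))) * Qv) ^ (s'+1) := by
    have hQpos : (0:ℝ) ≤ (C * ((s'+1:ℕ):ℝ)) ^ (s'+1) * Qv ^ (s'+1) := by positivity
    calc g ^ (s'+1) ≤ ((Bad.card : ℝ)/n) ^ s' * ((n:ℝ)⁻¹ * ∑ i ∈ Bad, (f i ^ 2) ^ (s'+1)) := hH
      _ ≤ ((Bad.card : ℝ)/n) ^ s' * ((C * ((s'+1:ℕ):ℝ)) ^ (s'+1) * Qv ^ (s'+1)) := by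
          apply mul_le_mul_of_nonneg_left (le_trans hsum_le hmom) (by positivity)
      _ ≤ (2*ε) ^ s' * ((C * ((s'+1:ℕ):ℝ)) ^ (s'+1) * Qv ^ (s'+1)) := by
          apply mul_le_mul_of_nonneg_right (pow_le_pow_left₀ hcard0 hcard' s') hQpos
      _ = (((2*ε) ^ (1 - 1/(((s'+1:ℕ)):ℝ))) ^ (s'+1))
            * ((C * ((s'+1:ℕ):ℝ)) ^ (s'+1) * Qv ^ (s'+1)) := by
          rw [hrpow]
      _ = (((2*ε) ^ (1 - 1/(((s'+1:ℕ)):ℝ)) * (C * ((s'+1:ℕ):ℝ))) * Qv) ^ (s'+1) := by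
          ring
  exact le_of_pow_le_pow_left₀ (Nat.succ_ne_zero s') (by positivity) hpow

lemma aux_crunch (θ p q d δ : ℝ) (hθ0 : 0 ≤ θ) (hθ1 : θ ≤ 1/100)
    (hp : 0 ≤ p) (hq : 0 ≤ q)
    (hδ : |δ| ≤ 2*θ*(p+q))
    (hd : |d| ≤ θ*p^2 + θ*q^2 + 2 * |δ| * q + δ^2)
    (hpq : d = p^2 - q^2) :
    d^2 ≤ 576 * θ^2 * (q^2)^2 := by
  have hδ0 : 0 ≤ |δ| := abs_nonneg δ
  have hδsq : δ^2 ≤ 4*θ^2*(p+q)^2 := by nlinarith [sq_abs δ]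
  have hdle := (abs_le.1 hd).2
  have hdge := (abs_le.1 hd).1
  have hd0 : 0 ≤ |d| := abs_nonneg d
  have hX : |d| ≤ θ*p^2 + θ*q^2 + 4*θ*(p+q)*q + 4*θ^2*(p+q)^2 := by
    nlinarith [mul_le_mul_of_nonneg_right hδ hq]
  have hp2 : p^2 ≤ 2*q^2 := by
    have h1 : d ≤ θ*p^2 + θ*q^2 + 4*θ*(p+q)*q + 4*θ^2*(p+q)^2 := le_trans (le_abs_self d) hX
    nlinarith [sq_nonneg (p-q), sq_nonneg (p+q), mul_nonneg hθ0 (sq_nonneg (p+q)),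
      mul_nonneg (mul_nonneg hθ0 hθ0) (sq_nonneg (p+q)), mul_nonneg hp hq]
  have hfinal : |d| ≤ 24*θ*q^2 := by
    nlinarith [sq_nonneg (p-q), sq_nonneg (p+q), mul_nonneg hθ0 (sq_nonneg (p-q)),
      mul_nonneg (mul_nonneg hθ0 hθ0) (sq_nonneg (p+q)), mul_nonneg hp hq,
      mul_nonneg hθ0 (mul_nonneg hp hq), sq_nonneg q, mul_nonneg hθ0 (sq_nonneg q)]
  have := sq_abs d
  nlinarith [mul_nonneg hθ0 (sq_nonneg q)]
open Classical in
/-- Robust covariance estimation: under certifiable subgaussianity, in an ε-corruption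
setup, `(Q u − Q* u)² ≤ K·(C t)²·ε^{2−4/t}·Q*(u)²` for absolute constants `K, c₀`. -/
theorem stmt_7 :
    ∃ K c0 : ℝ, 0 < K ∧ 0 < c0 ∧
      ∀ (t : ℕ), 4 ≤ t → Even t →
      ∀ C ε : ℝ, 0 < C → 0 < ε → ε < 1 → C ^ 2 * ε ≤ c0 →
      ∀ (n d : ℕ), 0 < n → 0 < d →
      ∀ (xstar y x : Fin n → EuclideanSpace ℝ (Fin d)) (w : Fin n → ℝ),
      (∀ i, w i = 0 ∨ w i = 1) →
      ((1 - ε) * n ≤ ∑ i, w i) →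
      (∀ i, w i • (y i - x i) = 0) →
      (((Finset.univ.filter fun i => y i ≠ xstar i).card : ℝ) ≤ ε * n) →
      ∀ (μ μstar : EuclideanSpace ℝ (Fin d)),
      μ = (n : ℝ)⁻¹ • ∑ i, x i →
      μstar = (n : ℝ)⁻¹ • ∑ i, xstar i →
      ∀ (Q Qstar : EuclideanSpace ℝ (Fin d) → ℝ),
      (∀ u, Q u = (n : ℝ)⁻¹ * ∑ i, (inner ℝ u (x i - μ) : ℝ) ^ 2) →
      (∀ u, Qstar u = (n : ℝ)⁻¹ * ∑ i, (inner ℝ u (xstar i - μstar) : ℝ) ^ 2) →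
      (∀ t' : ℕ, 1 ≤ t' → t' ≤ t / 2 → ∀ u,
        (n : ℝ)⁻¹ * ∑ i, (inner ℝ u (x i - μ) : ℝ) ^ (2 * t')
          ≤ (C * t') ^ t' * (Q u) ^ t') →
      (∀ t' : ℕ, 1 ≤ t' → t' ≤ t / 2 → ∀ u,
        (n : ℝ)⁻¹ * ∑ i, (inner ℝ u (xstar i - μstar) : ℝ) ^ (2 * t')
          ≤ (C * t') ^ t' * (Qstar u) ^ t') →
      ∀ u : EuclideanSpace ℝ (Fin d),
        (Q u - Qstar u) ^ 2
          ≤ K * (C * t) ^ 2 * ε ^ ((2 : ℝ) - 4 / t) * (Qstar u) ^ 2 := by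
  classical
  refine ⟨10^6, 1/10^7, by norm_num, by norm_num, ?_⟩
  intro t ht hte C ε hCpos hε hε1 hc n d hn hd xstar y x w hw hwsum hwxy hycard
    μ μstar hμ hμstar Q Qstar hQ hQstar hmom hmomstar u
  have hn0 : (0:ℝ) < n := by exact_mod_cast hn
  have hQ0 : 0 ≤ Q u := by rw [hQ]; positivity
  have hQs0 : 0 ≤ Qstar u := by rw [hQstar]; positivity
  have hRHS0 : 0 ≤ (10^6:ℝ) * (C * t) ^ 2 * ε ^ ((2:ℝ) - 4/(t:ℝ)) * (Qstar u)^2 := by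
    positivity
  rcases lt_or_ge C 1 with hC1 | hC1
  · -- degenerate case : Q u = 0 and Qstar u = 0
    have h2 : 1 ≤ t/2 := by omega
    have hq1 := hmom 1 le_rfl h2 u
    have hq2 := hmomstar 1 le_rfl h2 u
    simp only [Nat.cast_one, mul_one, pow_one] at hq1 hq2
    rw [← hQ u] at hq1
    rw [← hQstar u] at hq2
    have hQu : Q u = 0 := le_antisymm (by nlinarith [hQ0]) hQ0
    have hQsu : Qstar u = 0 := le_antisymm (by nlinarith [hQs0]) hQs0
    rw [hQu, hQsu]
    simpa using hRHS0
  · -- main case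
    have hε7 : ε ≤ 1/10^7 := by nlinarith [sq_nonneg (C - 1), sq_nonneg (C + 1)]
    have h2ε : (0:ℝ) < 2*ε := by linarith
    have h2ε1 : 2*ε ≤ 1 := by linarith
    obtain ⟨s, hs1, hs2, hθ1, hθ2⟩ := aux_theta t ht hte C ε hC1 hε hc
    obtain ⟨s', rfl⟩ : ∃ s'', s = s'' + 1 := ⟨s - 1, by omega⟩
    set θ : ℝ := (2*ε)^(1 - 1/((s'+1:ℕ):ℝ)) * (C * ((s'+1:ℕ):ℝ)) with hθdef
    have hθ0 : (0:ℝ) ≤ θ := by positivity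
    set a : Fin n → ℝ := fun i => (inner ℝ u (x i - μ) : ℝ) with hadef
    set b : Fin n → ℝ := fun i => (inner ℝ u (xstar i - μstar) : ℝ) with hbdef
    set δ : ℝ := (inner ℝ u (μ - μstar) : ℝ) with hδdef
    set Bad : Finset (Fin n) := Finset.univ.filter (fun i => x i ≠ xstar i) with hBaddef
    have hQa : Q u = (n:ℝ)⁻¹ * ∑ i, a i ^ 2 := hQ u
    have hQb : Qstar u = (n:ℝ)⁻¹ * ∑ i, b i ^ 2 := hQstar u
    -- (1) the bad set is small
    have hBadcard : (Bad.card : ℝ) ≤ 2*ε*n := by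
      have hsub : Bad ⊆ (univ.filter fun i => y i ≠ xstar i) ∪ (univ.filter fun i => w i = 0) := by
        intro i hi
        rw [hBaddef, mem_filter] at hi
        rw [mem_union, mem_filter, mem_filter]
        rcases hw i with h0 | h1w
        · exact Or.inr ⟨mem_univ i, h0⟩
        · left
          refine ⟨mem_univ i, fun hy => ?_⟩
          have hyx := hwxy i
          rw [h1w, one_smul, sub_eq_zero] at hyx
          exact hi.2 (hyx.symm.trans hy)
      have hZcard : (((univ.filter fun i => w i = 0) : Finset (Fin n)).card : ℝ) ≤ ε * n := by
        have hsplit := sum_filter_add_sum_filter_not univ (fun i => w i = 0) w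
        have hz0 : ∑ i ∈ univ.filter (fun i => w i = 0), w i = 0 :=
          sum_eq_zero (fun i hi => (mem_filter.1 hi).2)
        have hz1 : ∑ i ∈ univ.filter (fun i => ¬ w i = 0), w i
            ≤ ((univ.filter (fun i => ¬ w i = 0)).card : ℝ) := by
          have := sum_le_card_nsmul (univ.filter (fun i => ¬ w i = 0)) w 1
            (fun i _ => by rcases hw i with h | h <;> simp [h])
          rwa [nsmul_eq_mul, mul_one] at this
        have hcc : (univ.filter (fun i => ¬ w i = 0)).card
            + (univ.filter (fun i => w i = 0)).card = n := by
          have h := card_filter_add_card_filter_not (s := (univ : Finset (Fin n)))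
            (p := fun i => w i = 0)
          simp only [card_univ, Fintype.card_fin] at h
          omega
        have hcc' : ((univ.filter (fun i => ¬ w i = 0)).card : ℝ)
            = (n:ℝ) - ((univ.filter (fun i => w i = 0)).card : ℝ) := by
          have h2 := congrArg (Nat.cast (R := ℝ)) hcc
          push_cast at h2
          linarith
        linarith [hwsum, hsplit.symm, hz0, hz1, hcc']
      have hcard2 : (Bad.card : ℝ)
          ≤ ((univ.filter fun i => y i ≠ xstar i).card : ℝ)
            + (((univ.filter fun i => w i = 0) : Finset (Fin n)).card : ℝ) := by
        have h1 := card_le_card hsub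
        have h2 := card_union_le (univ.filter fun i => y i ≠ xstar i)
          (univ.filter fun i => w i = 0)
        have := le_trans h1 h2
        exact_mod_cast this
      have := hycard
      linarith
    -- (2) identities
    have hab : ∀ i, a i - b i = (inner ℝ u (x i - xstar i) : ℝ) - δ := by
      intro i
      have hre : (x i - μ) - (xstar i - μstar) = (x i - xstar i) - (μ - μstar) := by abel
      calc a i - b i = (inner ℝ u ((x i - μ) - (xstar i - μstar)) : ℝ) := by
            rw [inner_sub_right]
        _ = (inner ℝ u ((x i - xstar i) - (μ - μstar)) : ℝ) := by rw [hre]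
        _ = (inner ℝ u (x i - xstar i) : ℝ) - δ := by rw [inner_sub_right]
    have hgood : ∀ i, x i = xstar i → a i = b i - δ := by
      intro i hxi
      have h1 := hab i
      rw [hxi, sub_self, inner_zero_right] at h1
      linarith
    have hδid : ((n:ℝ) - Bad.card) * δ = ∑ i ∈ Bad, (a i - b i) := by
      have h1 : (n:ℝ) • (μ - μstar) = ∑ i, (x i - xstar i) := by
        rw [hμ, hμstar, ← smul_sub, ← sum_sub_distrib, smul_smul,
          mul_inv_cancel₀ (ne_of_gt hn0), one_smul]
      have h2 : (n:ℝ) * δ = ∑ i, (inner ℝ u (x i - xstar i) : ℝ) := by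
        rw [hδdef, ← real_inner_smul_right, h1, inner_sum]
      have h3 : ∑ i, (inner ℝ u (x i - xstar i) : ℝ)
          = ∑ i ∈ Bad, (inner ℝ u (x i - xstar i) : ℝ) := by
        symm
        apply sum_subset (subset_univ Bad)
        intro i _ hiB
        have hxi : x i = xstar i := by
          by_contra hne
          exact hiB (by rw [hBaddef]; exact mem_filter.2 ⟨mem_univ i, hne⟩)
        rw [hxi, sub_self, inner_zero_right]
      have h4 : ∑ i ∈ Bad, (inner ℝ u (x i - xstar i) : ℝ)
          = ∑ i ∈ Bad, ((a i - b i) + δ) := by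
        apply sum_congr rfl
        intro i _
        rw [hab i]; ring
      have h5 : (n:ℝ) * δ = ∑ i ∈ Bad, (a i - b i) + Bad.card * δ := by
        rw [h2, h3, h4, sum_add_distrib, sum_const, nsmul_eq_mul]
      linear_combination h5
    -- (3) second-moment bounds on the bad set
    have hg : (n:ℝ)⁻¹ * ∑ i ∈ Bad, a i ^ 2 ≤ θ * Q u := by
      have hmm : (n:ℝ)⁻¹ * ∑ i, a i ^ (2 * (s'+1))
          ≤ (C * ((s'+1:ℕ):ℝ)) ^ (s'+1) * (Q u) ^ (s'+1) := hmom (s'+1) (by omega) hs2 u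
      exact aux_g n hn Bad a s' C ε (Q u) hC1 hε hQ0 hBadcard hmm
    have hgs : (n:ℝ)⁻¹ * ∑ i ∈ Bad, b i ^ 2 ≤ θ * Qstar u := by
      have hmm : (n:ℝ)⁻¹ * ∑ i, b i ^ (2 * (s'+1))
          ≤ (C * ((s'+1:ℕ):ℝ)) ^ (s'+1) * (Qstar u) ^ (s'+1) := hmomstar (s'+1) (by omega) hs2 u
      exact aux_g n hn Bad b s' C ε (Qstar u) hC1 hε hQs0 hBadcard hmm
    -- (4) 2ε ≤ θ
    have hCs1 : (1:ℝ) ≤ C * ((s'+1:ℕ):ℝ) := by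
      have hs1' : (1:ℝ) ≤ ((s'+1:ℕ):ℝ) := by exact_mod_cast hs1
      nlinarith
    have h2εθ : 2*ε ≤ θ := by
      have h1 : (2*ε) ^ (1:ℝ) ≤ (2*ε) ^ (1 - 1/((s'+1:ℕ):ℝ)) := by
        apply Real.rpow_le_rpow_of_exponent_ge h2ε h2ε1
        have : (0:ℝ) ≤ 1/((s'+1:ℕ):ℝ) := by positivity
        linarith
      rw [Real.rpow_one] at h1
      calc 2*ε ≤ (2*ε)^(1 - 1/((s'+1:ℕ):ℝ)) := h1
        _ = (2*ε)^(1 - 1/((s'+1:ℕ):ℝ)) * 1 := by ring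
        _ ≤ θ := mul_le_mul_of_nonneg_left hCs1 (Real.rpow_nonneg h2ε.le _)
    -- (5) first-moment bounds on the bad set
    have hcardn : (Bad.card:ℝ)/n ≤ 2*ε := by
      rw [div_le_iff₀ hn0]; linarith
    have hcardn0 : (0:ℝ) ≤ (Bad.card:ℝ)/n := by positivity
    have hh : (n:ℝ)⁻¹ * ∑ i ∈ Bad, |a i| ≤ θ * Real.sqrt (Q u) := by
      have hH := aux_holder n Bad (fun i => |a i|) (fun i => abs_nonneg _) 1
      have h2 : (n:ℝ)⁻¹ * ∑ i ∈ Bad, |a i| ^ (1+1) = (n:ℝ)⁻¹ * ∑ i ∈ Bad, a i ^ 2 := by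
        congr 1
        exact sum_congr rfl fun i _ => sq_abs (a i)
      rw [h2, pow_one] at hH
      have hH' : ((n:ℝ)⁻¹ * ∑ i ∈ Bad, |a i|) ^ 2
          ≤ ((Bad.card:ℝ)/n) * ((n:ℝ)⁻¹ * ∑ i ∈ Bad, a i ^ 2) := hH
      have hg0' : (0:ℝ) ≤ (n:ℝ)⁻¹ * ∑ i ∈ Bad, a i ^ 2 := by positivity
      have hrhs : (θ * Real.sqrt (Q u))^2 = θ^2 * Q u := by
        rw [mul_pow, Real.sq_sqrt hQ0]
      have hsq : ((n:ℝ)⁻¹ * ∑ i ∈ Bad, |a i|) ^ 2 ≤ (θ * Real.sqrt (Q u))^2 := by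
        rw [hrhs]
        have hθQ : (0:ℝ) ≤ θ * Q u := mul_nonneg hθ0 hQ0
        calc ((n:ℝ)⁻¹ * ∑ i ∈ Bad, |a i|) ^ 2
            ≤ ((Bad.card:ℝ)/n) * ((n:ℝ)⁻¹ * ∑ i ∈ Bad, a i ^ 2) := hH'
          _ ≤ (2*ε) * (θ * Q u) := by
              apply mul_le_mul hcardn hg hg0' (by linarith)
          _ ≤ θ * (θ * Q u) := mul_le_mul_of_nonneg_right h2εθ hθQ
          _ = θ^2 * Q u := by ring
      exact le_of_pow_le_pow_left₀ two_ne_zero (by positivity) hsq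
    have hhs : (n:ℝ)⁻¹ * ∑ i ∈ Bad, |b i| ≤ θ * Real.sqrt (Qstar u) := by
      have hH := aux_holder n Bad (fun i => |b i|) (fun i => abs_nonneg _) 1
      have h2 : (n:ℝ)⁻¹ * ∑ i ∈ Bad, |b i| ^ (1+1) = (n:ℝ)⁻¹ * ∑ i ∈ Bad, b i ^ 2 := by
        congr 1
        exact sum_congr rfl fun i _ => sq_abs (b i)
      rw [h2, pow_one] at hH
      have hH' : ((n:ℝ)⁻¹ * ∑ i ∈ Bad, |b i|) ^ 2
          ≤ ((Bad.card:ℝ)/n) * ((n:ℝ)⁻¹ * ∑ i ∈ Bad, b i ^ 2) := hH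
      have hg0' : (0:ℝ) ≤ (n:ℝ)⁻¹ * ∑ i ∈ Bad, b i ^ 2 := by positivity
      have hrhs : (θ * Real.sqrt (Qstar u))^2 = θ^2 * Qstar u := by
        rw [mul_pow, Real.sq_sqrt hQs0]
      have hsq : ((n:ℝ)⁻¹ * ∑ i ∈ Bad, |b i|) ^ 2 ≤ (θ * Real.sqrt (Qstar u))^2 := by
        rw [hrhs]
        have hθQ : (0:ℝ) ≤ θ * Qstar u := mul_nonneg hθ0 hQs0
        calc ((n:ℝ)⁻¹ * ∑ i ∈ Bad, |b i|) ^ 2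
            ≤ ((Bad.card:ℝ)/n) * ((n:ℝ)⁻¹ * ∑ i ∈ Bad, b i ^ 2) := hH'
          _ ≤ (2*ε) * (θ * Qstar u) := by
              apply mul_le_mul hcardn hgs hg0' (by linarith)
          _ ≤ θ * (θ * Qstar u) := mul_le_mul_of_nonneg_right h2εθ hθQ
          _ = θ^2 * Qstar u := by ring
      exact le_of_pow_le_pow_left₀ two_ne_zero (by positivity) hsq
    -- (6) global first moment of b
    have hbabs : (n:ℝ)⁻¹ * ∑ i, |b i| ≤ Real.sqrt (Qstar u) := by
      have hH := aux_holder n univ (fun i => |b i|) (fun i => abs_nonneg _) 1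
      have h2 : (n:ℝ)⁻¹ * ∑ i, |b i| ^ (1+1) = (n:ℝ)⁻¹ * ∑ i, b i ^ 2 := by
        congr 1
        exact sum_congr rfl fun i _ => sq_abs (b i)
      have hcu : (((univ : Finset (Fin n)).card : ℝ)/n) = 1 := by
        rw [card_univ, Fintype.card_fin]
        field_simp
      rw [h2, pow_one, hcu, one_mul, ← hQb] at hH
      have hsq : ((n:ℝ)⁻¹ * ∑ i, |b i|) ^ 2 ≤ Qstar u := hH
      have h0 : (0:ℝ) ≤ (n:ℝ)⁻¹ * ∑ i, |b i| := by positivity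
      exact (Real.le_sqrt h0 hQs0).2 hsq
    -- (7) bound on |δ|
    have hδbound : |δ| ≤ 2*θ*(Real.sqrt (Q u) + Real.sqrt (Qstar u)) := by
      have habs : |∑ i ∈ Bad, (a i - b i)| ≤ ∑ i ∈ Bad, |a i| + ∑ i ∈ Bad, |b i| := by
        rw [← sum_add_distrib]
        exact (abs_sum_le_sum_abs _ _).trans (sum_le_sum fun i _ => abs_sub (a i) (b i))
      have hcoef : (n:ℝ)/2 ≤ (n:ℝ) - Bad.card := by nlinarith
      have h1 : ((n:ℝ) - Bad.card) * |δ| = |∑ i ∈ Bad, (a i - b i)| := by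
        rw [← hδid, abs_mul, abs_of_nonneg (by nlinarith : (0:ℝ) ≤ (n:ℝ) - Bad.card)]
      have h3a : ∑ i ∈ Bad, |a i| = (n:ℝ) * ((n:ℝ)⁻¹ * ∑ i ∈ Bad, |a i|) := by
        field_simp
      have h3b : ∑ i ∈ Bad, |b i| = (n:ℝ) * ((n:ℝ)⁻¹ * ∑ i ∈ Bad, |b i|) := by
        field_simp
      have h4 : ((n:ℝ) - Bad.card) * |δ| ≤ (n:ℝ) * ((n:ℝ)⁻¹ * ∑ i ∈ Bad, |a i|)
          + (n:ℝ) * ((n:ℝ)⁻¹ * ∑ i ∈ Bad, |b i|) := by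
        rw [← h3a, ← h3b, h1]; exact habs
      have h5 : (n:ℝ)/2 * |δ| ≤ ((n:ℝ) - Bad.card) * |δ| :=
        mul_le_mul_of_nonneg_right hcoef (abs_nonneg δ)
      have h6 := mul_le_mul_of_nonneg_left hh (le_of_lt hn0)
      have h7 := mul_le_mul_of_nonneg_left hhs (le_of_lt hn0)
      have h8 : (n:ℝ)/2 * |δ| ≤ (n:ℝ) * (θ * Real.sqrt (Q u)) + (n:ℝ) * (θ * Real.sqrt (Qstar u)) := by
        linarith
      have h10 : (n:ℝ)/2 * |δ| ≤ (n:ℝ)/2 * (2*θ*(Real.sqrt (Q u) + Real.sqrt (Qstar u))) := by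
        linarith
      exact le_of_mul_le_mul_left (by linarith) (by linarith : (0:ℝ) < (n:ℝ)/2)
    -- (8) main decomposition
    have hmain : |Q u - Qstar u| ≤ θ * Real.sqrt (Q u) ^ 2 + θ * Real.sqrt (Qstar u) ^ 2
        + 2 * |δ| * Real.sqrt (Qstar u) + δ^2 := by
      rw [Real.sq_sqrt hQ0, Real.sq_sqrt hQs0]
      set Good : Finset (Fin n) := univ.filter (fun i => ¬ x i ≠ xstar i) with hGooddef
      have hsplit : Q u - Qstar u = (n:ℝ)⁻¹ * ∑ i ∈ Bad, (a i^2 - b i^2)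
          + (n:ℝ)⁻¹ * ∑ i ∈ Good, (δ^2 - 2*δ*b i) := by
        have e1 : ∑ i, (a i^2 - b i^2)
            = ∑ i ∈ Bad, (a i^2 - b i^2) + ∑ i ∈ Good, (a i^2 - b i^2) := by
          rw [hBaddef, hGooddef]
          exact (sum_filter_add_sum_filter_not univ _ _).symm
        have e2 : ∑ i ∈ Good, (a i^2 - b i^2) = ∑ i ∈ Good, (δ^2 - 2*δ*b i) := by
          apply sum_congr rfl
          intro i hi
          have hxi : x i = xstar i := by
            rw [hGooddef, mem_filter] at hi
            exact not_not.1 hi.2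
          rw [hgood i hxi]; ring
        rw [hQa, hQb, ← mul_sub, ← sum_sub_distrib, e1, mul_add, e2]
      have t1 : |(n:ℝ)⁻¹ * ∑ i ∈ Bad, (a i^2 - b i^2)| ≤ θ * Q u + θ * Qstar u := by
        have habs : |∑ i ∈ Bad, (a i^2 - b i^2)| ≤ ∑ i ∈ Bad, (a i^2 + b i^2) := by
          refine (abs_sum_le_sum_abs _ _).trans (sum_le_sum fun i _ => ?_)
          calc |a i^2 - b i^2| ≤ |a i^2| + |b i^2| := abs_sub _ _
            _ = a i^2 + b i^2 := by
                rw [abs_of_nonneg (sq_nonneg _), abs_of_nonneg (sq_nonneg _)]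
        calc |(n:ℝ)⁻¹ * ∑ i ∈ Bad, (a i^2 - b i^2)|
            = (n:ℝ)⁻¹ * |∑ i ∈ Bad, (a i^2 - b i^2)| := by
              rw [abs_mul, abs_of_nonneg (by positivity : (0:ℝ) ≤ (n:ℝ)⁻¹)]
          _ ≤ (n:ℝ)⁻¹ * ∑ i ∈ Bad, (a i^2 + b i^2) :=
              mul_le_mul_of_nonneg_left habs (by positivity)
          _ = (n:ℝ)⁻¹ * ∑ i ∈ Bad, a i^2 + (n:ℝ)⁻¹ * ∑ i ∈ Bad, b i^2 := by
              rw [sum_add_distrib]; ring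
          _ ≤ θ * Q u + θ * Qstar u := add_le_add hg hgs
      have t2 : |(n:ℝ)⁻¹ * ∑ i ∈ Good, (δ^2 - 2*δ*b i)|
          ≤ δ^2 + 2 * |δ| * Real.sqrt (Qstar u) := by
        have habs2 : |∑ i ∈ Good, (δ^2 - 2*δ*b i)| ≤ ∑ i ∈ Good, (δ^2 + 2 * |δ| * |b i|) := by
          refine (abs_sum_le_sum_abs _ _).trans (sum_le_sum fun i _ => ?_)
          calc |δ^2 - 2*δ*b i| ≤ |δ^2| + |2*δ*b i| := abs_sub _ _
            _ = δ^2 + 2 * |δ| * |b i| := by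
                rw [abs_of_nonneg (sq_nonneg δ), abs_mul, abs_mul]
                norm_num
        have hsum2 : ∑ i ∈ Good, (δ^2 + 2 * |δ| * |b i|)
            = (Good.card : ℝ) * δ^2 + 2 * |δ| * ∑ i ∈ Good, |b i| := by
          rw [sum_add_distrib, sum_const, nsmul_eq_mul, ← mul_sum]
        have hGcard : (Good.card : ℝ) ≤ (n:ℝ) := by
          have := card_le_card (subset_univ Good)
          rw [card_univ, Fintype.card_fin] at this
          exact_mod_cast this
        have hGb : ∑ i ∈ Good, |b i| ≤ ∑ i, |b i| :=
          sum_le_sum_of_subset_of_nonneg (subset_univ _) (fun i _ _ => abs_nonneg _)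
        have hstep : |(n:ℝ)⁻¹ * ∑ i ∈ Good, (δ^2 - 2*δ*b i)|
            ≤ (n:ℝ)⁻¹ * ((Good.card : ℝ) * δ^2 + 2 * |δ| * ∑ i, |b i|) := by
          rw [abs_mul, abs_of_nonneg (by positivity : (0:ℝ) ≤ (n:ℝ)⁻¹)]
          apply mul_le_mul_of_nonneg_left _ (by positivity)
          calc |∑ i ∈ Good, (δ^2 - 2*δ*b i)| ≤ ∑ i ∈ Good, (δ^2 + 2 * |δ| * |b i|) := habs2
            _ = (Good.card : ℝ) * δ^2 + 2 * |δ| * ∑ i ∈ Good, |b i| := hsum2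
            _ ≤ (Good.card : ℝ) * δ^2 + 2 * |δ| * ∑ i, |b i| := by
                have : (0:ℝ) ≤ 2 * |δ| := by positivity
                nlinarith [hGb]
        have hfin2 : (n:ℝ)⁻¹ * ((Good.card : ℝ) * δ^2 + 2 * |δ| * ∑ i, |b i|)
            ≤ δ^2 + 2 * |δ| * Real.sqrt (Qstar u) := by
          have e3 : (n:ℝ)⁻¹ * ((Good.card : ℝ) * δ^2) ≤ δ^2 := by
            rw [← mul_assoc]
            have h1 : (n:ℝ)⁻¹ * (Good.card : ℝ) ≤ 1 := by
              rw [← div_eq_inv_mul, div_le_one hn0]; exact hGcard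
            nlinarith [sq_nonneg δ, mul_nonneg (inv_nonneg.2 hn0.le) (Nat.cast_nonneg Good.card)]
          have e4 : (n:ℝ)⁻¹ * (2 * |δ| * ∑ i, |b i|) ≤ 2 * |δ| * Real.sqrt (Qstar u) := by
            have h1 : (n:ℝ)⁻¹ * (2 * |δ| * ∑ i, |b i|) = 2 * |δ| * ((n:ℝ)⁻¹ * ∑ i, |b i|) := by
              ring
            rw [h1]
            apply mul_le_mul_of_nonneg_left hbabs (by positivity)
          calc (n:ℝ)⁻¹ * ((Good.card : ℝ) * δ^2 + 2 * |δ| * ∑ i, |b i|)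
              = (n:ℝ)⁻¹ * ((Good.card : ℝ) * δ^2) + (n:ℝ)⁻¹ * (2 * |δ| * ∑ i, |b i|) := by ring
            _ ≤ δ^2 + 2 * |δ| * Real.sqrt (Qstar u) := add_le_add e3 e4
        exact le_trans hstep hfin2
      calc |Q u - Qstar u| ≤ |(n:ℝ)⁻¹ * ∑ i ∈ Bad, (a i^2 - b i^2)|
            + |(n:ℝ)⁻¹ * ∑ i ∈ Good, (δ^2 - 2*δ*b i)| := by
            rw [hsplit]; exact abs_add_le _ _
        _ ≤ θ * Q u + θ * Qstar u + (δ^2 + 2 * |δ| * Real.sqrt (Qstar u)) := add_le_add t1 t2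
        _ = θ * Q u + θ * Qstar u + 2 * |δ| * Real.sqrt (Qstar u) + δ^2 := by ring
    -- (9) crunch
    have hcr := aux_crunch θ (Real.sqrt (Q u)) (Real.sqrt (Qstar u)) (Q u - Qstar u) δ
      hθ0 hθ1 (Real.sqrt_nonneg _) (Real.sqrt_nonneg _) hδbound hmain
      (by rw [Real.sq_sqrt hQ0, Real.sq_sqrt hQs0])
    rw [Real.sq_sqrt hQs0] at hcr
    -- (10) convert θ to the final bound
    have ht0 : (0:ℝ) < (t:ℝ) := by
      have : 0 < t := by omega
      exact_mod_cast this
    have hXsq : ((2*ε) ^ ((1:ℝ) - 2/(t:ℝ)))^2 = (2*ε)^((2:ℝ) - 4/(t:ℝ)) := by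
      rw [pow_two, ← Real.rpow_add h2ε]
      congr 1; ring
    have h24 : (2:ℝ)^((2:ℝ)-4/(t:ℝ)) ≤ 4 := by
      have h1 : (2:ℝ)^((2:ℝ)-4/(t:ℝ)) ≤ (2:ℝ)^(2:ℝ) := by
        apply Real.rpow_le_rpow_of_exponent_le (by norm_num)
        have : (0:ℝ) ≤ 4/(t:ℝ) := by positivity
        linarith
      have h2 : (2:ℝ)^(2:ℝ) = 4 := by
        rw [show (2:ℝ) = ((2:ℕ):ℝ) from by norm_num, Real.rpow_natCast]
        norm_num
      linarith
    have h2rm : (2*ε)^((2:ℝ) - 4/(t:ℝ)) ≤ 4 * ε^((2:ℝ) - 4/(t:ℝ)) := by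
      rw [Real.mul_rpow (by norm_num) hε.le]
      have hε4 : (0:ℝ) ≤ ε^((2:ℝ) - 4/(t:ℝ)) := Real.rpow_nonneg hε.le _
      nlinarith
    have hθsq2 : θ^2 ≤ 256*(C*(t:ℝ))^2*ε^((2:ℝ)-4/(t:ℝ)) := by
      have h1 : θ^2 ≤ (8*(C*(t:ℝ))*(2*ε)^((1:ℝ) - 2/(t:ℝ)))^2 := by
        apply pow_le_pow_left₀ hθ0 hθ2
      have h2 : (8*(C*(t:ℝ))*(2*ε)^((1:ℝ) - 2/(t:ℝ)))^2
          = 64*(C*(t:ℝ))^2 * ((2*ε) ^ ((1:ℝ) - 2/(t:ℝ)))^2 := by ring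
      rw [h2, hXsq] at h1
      have hCt2 : (0:ℝ) ≤ 64*(C*(t:ℝ))^2 := by positivity
      calc θ^2 ≤ 64*(C*(t:ℝ))^2 * ((2*ε)^((2:ℝ)-4/(t:ℝ))) := h1
        _ ≤ 64*(C*(t:ℝ))^2 * (4 * ε^((2:ℝ)-4/(t:ℝ))) :=
            mul_le_mul_of_nonneg_left h2rm hCt2
        _ = 256*(C*(t:ℝ))^2*ε^((2:ℝ)-4/(t:ℝ)) := by ring
    -- final assembly
    have hQs2 : (0:ℝ) ≤ (Qstar u)^2 := sq_nonneg _
    have hfin : (Q u - Qstar u)^2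
        ≤ 576 * (256*(C*(t:ℝ))^2*ε^((2:ℝ)-4/(t:ℝ))) * (Qstar u)^2 := by
      calc (Q u - Qstar u)^2 ≤ 576 * θ^2 * (Qstar u)^2 := hcr
        _ ≤ 576 * (256*(C*(t:ℝ))^2*ε^((2:ℝ)-4/(t:ℝ))) * (Qstar u)^2 := by
            apply mul_le_mul_of_nonneg_right _ hQs2
            exact mul_le_mul_of_nonneg_left hθsq2 (by norm_num)
    have hεp : (0:ℝ) ≤ (C*(t:ℝ))^2*ε^((2:ℝ)-4/(t:ℝ))*(Qstar u)^2 := by positivity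
    calc (Q u - Qstar u)^2
        ≤ 576*(256*(C*(t:ℝ))^2*ε^((2:ℝ)-4/(t:ℝ)))*(Qstar u)^2 := hfin
      _ = 147456 * ((C*(t:ℝ))^2*ε^((2:ℝ)-4/(t:ℝ))*(Qstar u)^2) := by ring
      _ ≤ 10^6 * ((C*(t:ℝ))^2*ε^((2:ℝ)-4/(t:ℝ))*(Qstar u)^2) := by linarith [hεp]
      _ = 10^6*(C*(t:ℝ))^2*ε^((2:ℝ)-4/(t:ℝ))*(Qstar u)^2 := by ring
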